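/- Let w ∈ S_{n+1}, let w₀ be the longest permutation in S_{n+1}, and let α be a partition. Then the number of semistandard Young tableaux of shape α' whose column word is a reduced word for w₀ w⁻¹ w₀ equals the number of semistandard skew tableaux of shape the 180-degree rotation of α' whose column word is a reduced word for w. -/

import Mathlib

open scoped Classical

noncomputable section

namespace SchubertQuiver

/-- We model the symmetric group `S_∞` as permutations of `ℕ`, acting on the points
`1, 2, 3, …` (the point `0` is fixed by all permutations we consider). -/
abbrev Perm' := Equiv.Perm ℕ

/-- The simple transposition `s i = (i, i+1)`. -/
def sT (i : ℕ) : Perm' := Equiv.swap i (i + 1)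

/-- The product `s_{e₁} ⋯ s_{e_ℓ}` associated to a word `(e₁, …, e_ℓ)`. -/
def wordProd (l : List ℕ) : Perm' := (l.map sT).prod

/-- The Coxeter length of a permutation: the least length of a word expressing it. -/
def len (w : Perm') : ℕ := sInf {m | ∃ l : List ℕ, wordProd l = w ∧ l.length = m}

/-- `l` is a reduced word for `w`. -/
def IsReducedWord (w : Perm') (l : List ℕ) : Prop := wordProd l = w ∧ l.length = len w

/-- `w ∈ S_N`: the permutation `w` permutes `{1, …, N}` (and fixes everything else). -/
def MemS (N : ℕ) (w : Perm') : Prop := w 0 = 0 ∧ ∀ k, N < k → w k = k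

/-- The longest element of `S_N`, i.e. `i ↦ N + 1 - i` on `{1, …, N}`. -/
def longest (N : ℕ) : Perm' :=
  Function.Involutive.toPerm (fun k => if 1 ≤ k ∧ k ≤ N then N + 1 - k else k)
    (by intro k; dsimp only; split_ifs <;> omega)

/-! ### Single and double Schubert polynomials, as families satisfying the
defining divided-difference recursion. -/

abbrev SPoly := MvPolynomial ℕ ℤ

open MvPolynomial in
/-- `S` is the family of single Schubert polynomials `w ↦ 𝔖_w(X)` (in the variables
`x₁, x₂, …`, where `x_i` is the variable `X i`): it satisfies
`𝔖_{w₀} = x₁^{N-1} ⋯ x_{N-1}` for the longest element `w₀` of each `S_N`, and the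
divided-difference recursion `∂_i 𝔖_{w sᵢ} = 𝔖_w` whenever `ℓ(w sᵢ) = ℓ(w) + 1`,
stated in the division-free form
`(x_i - x_{i+1}) · 𝔖_w = 𝔖_{w sᵢ} - (𝔖_{w sᵢ} with x_i, x_{i+1} exchanged)`. -/
structure IsSchubertFamily (S : Perm' → SPoly) : Prop where
  base : ∀ N : ℕ, S (longest N) = ∏ i ∈ Finset.Icc 1 N, (X i : SPoly) ^ (N - i)
  step : ∀ (w : Perm') (i : ℕ), 1 ≤ i → len (w * sT i) = len w + 1 →
    (X i - X (i + 1)) * S w =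
      S (w * sT i) - rename (Equiv.swap i (i + 1) : ℕ → ℕ) (S (w * sT i))

abbrev DPoly := MvPolynomial (ℕ ⊕ ℕ) ℤ

/-- The variable `x_i`. -/
def xv (i : ℕ) : DPoly := MvPolynomial.X (Sum.inl i)
/-- The variable `y_j`. -/
def yv (j : ℕ) : DPoly := MvPolynomial.X (Sum.inr j)

open MvPolynomial in
/-- `DS` is the family of double Schubert polynomials `w ↦ 𝔖_w(X; Y)`:
`𝔖_{w₀}(X;Y) = ∏_{i+j ≤ N} (x_i - y_j)` for the longest element of each `S_N`, and
the divided-difference recursion (acting on the x-variables) in division-free form. -/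
structure IsDoubleSchubertFamily (DS : Perm' → DPoly) : Prop where
  base : ∀ N : ℕ, DS (longest N) =
    ∏ p ∈ (Finset.Icc 1 N ×ˢ Finset.Icc 1 N).filter (fun p : ℕ × ℕ => p.1 + p.2 ≤ N),
      (xv p.1 - yv p.2)
  step : ∀ (w : Perm') (i : ℕ), 1 ≤ i → len (w * sT i) = len w + 1 →
    (xv i - xv (i + 1)) * DS w =
      DS (w * sT i) -
        rename (Equiv.sumCongr (Equiv.swap i (i + 1)) (Equiv.refl ℕ) : ℕ ⊕ ℕ → ℕ ⊕ ℕ)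
          (DS (w * sT i))

/-! ### Schur determinants -/

variable {A : Type} [CommRing A]

/-- The elements `h_k` determined by
`Σ_k h_k t^k = (1 - d₁ t + d₂ t² - ⋯) / (1 - c₁ t + c₂ t² - ⋯)`.
(The value of `c 0`, `d 0` is ignored; the constant terms of both series are `1`.) -/
def hSeq (c d : ℕ → A) (k : ℕ) : A :=
  PowerSeries.coeff k
    ((PowerSeries.mk fun j => if j = 0 then 1 else (-1) ^ j * d j) *
      PowerSeries.invOfUnit (PowerSeries.mk fun j => if j = 0 then 1 else (-1) ^ j * c j) 1)

/-- `h_k` for an integer index, with `h_k = 0` for `k < 0`. -/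
def hZ (c d : ℕ → A) (k : ℤ) : A := if k < 0 then 0 else hSeq c d k.toNat

/-- The Schur determinant `s_μ(c - d) = det(h_{μ_i + j - i})`, the determinant being of
size the number of (nonzero) rows of `μ`. -/
def schurDet (c d : ℕ → A) (μ : YoungDiagram) : A :=
  Matrix.det (Matrix.of fun i j : Fin (μ.colLen 0) =>
    hZ c d ((μ.rowLen i : ℤ) + (j : ℤ) - (i : ℤ)))

/-! ### Column words of semistandard tableaux

Mathlib's `SemistandardYoungTableau` has entries in `ℕ = {0, 1, 2, …}`; we identify a
tableau with positive entries (as in the paper) with a Mathlib tableau via the shift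
`e ↦ e - 1`.  Thus the letter recorded in the column word of a cell with (Mathlib) entry
`e` is `e + 1`, and "the entries of `T` are at most `m`" becomes `T i j + 1 ≤ m`. -/

/-- The column word of a semistandard Young tableau: the entries of each column are read
from bottom to top, the columns being taken from left to right (entries shifted by `+1`,
see above). -/
def colWord {μ : YoungDiagram} (T : SemistandardYoungTableau μ) : List ℕ :=
  (List.range (μ.rowLen 0)).flatMap fun j =>
    ((List.range (μ.colLen j)).reverse).map fun i => T i j + 1

/-! ### Universal Schubert polynomials -/

/-- The index type for the coefficients `a_{i₁, …, i_n}`: sequences `(i₁, …, i_n)` with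
`0 ≤ i_α ≤ α`; the component at `t : Fin n` is `i_{t+1} ∈ {0, …, t+1}`. -/
abbrev Seqs (n : ℕ) := ∀ t : Fin n, Fin (t.1 + 2)

/-- The elementary symmetric polynomial `e_k(x₁, …, x_j)`. -/
def eP (k j : ℕ) : SPoly :=
  ∑ s ∈ Finset.powersetCard k (Finset.Icc 1 j), ∏ i ∈ s, MvPolynomial.X i

/-- The monomial `c_i(j)` in the polynomial ring on variables indexed by `ℕ × ℕ`
(with the convention `c_0(j) = 1`). -/
def cM (i j : ℕ) : MvPolynomial (ℕ × ℕ) ℤ := if i = 0 then 1 else MvPolynomial.X (i, j)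

/-- `U` is the family of single universal Schubert polynomials (with respect to `n`)
in the abstract variables `c_i(j) = X (i, j)`, `1 ≤ i ≤ j ≤ n`, attached to the single
Schubert family `S`: for `w ∈ S_{n+1}` there are (uniquely determined) integers
`a_{i₁,…,i_n}`, supported on sequences with `Σ i_α = ℓ(w)` and `i_α ≤ α`, with
`𝔖_w(X) = Σ a_{i₁,…,i_n} e_{i₁}(x₁) ⋯ e_{i_n}(x₁,…,x_n)` and
`𝔖_w(c) = Σ a_{i₁,…,i_n} c_{i₁}(1) ⋯ c_{i_n}(n)`. -/
def IsUnivFamily (n : ℕ) (S : Perm' → SPoly) (U : Perm' → MvPolynomial (ℕ × ℕ) ℤ) : Prop :=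
  ∀ w : Perm', MemS (n + 1) w → ∃ a : Seqs n → ℤ,
    (∀ q : Seqs n, a q ≠ 0 → (∑ t : Fin n, ((q t : ℕ))) = len w) ∧
    S w = ∑ q : Seqs n, MvPolynomial.C (a q) * ∏ t : Fin n, eP (q t) (t.1 + 1) ∧
    U w = ∑ q : Seqs n, MvPolynomial.C (a q) * ∏ t : Fin n, cM (q t) (t.1 + 1)

/-- Substitute the alphabet `f` (i.e. `c_i(j) := f i j`) into a universal polynomial. -/
def substA (f : ℕ → ℕ → A) (p : MvPolynomial (ℕ × ℕ) ℤ) : A :=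
  MvPolynomial.aeval (fun ij : ℕ × ℕ => f ij.1 ij.2) p

/-- The double universal Schubert polynomial
`𝔖_w(c; d) = Σ_{u·v=w} (-1)^{ℓ(u)} 𝔖_{u⁻¹}(d) 𝔖_v(c)`, the sum being over all reduced
factorizations `u·v = w`, evaluated on the two alphabets `cA` and `dA`. -/
def dblU (U : Perm' → MvPolynomial (ℕ × ℕ) ℤ) (cA dA : ℕ → ℕ → A) (w : Perm') : A :=
  ∑ᶠ uv : Perm' × Perm',
    if uv.1 * uv.2 = w ∧ len uv.1 + len uv.2 = len w then
      (-1 : A) ^ len uv.1 * substA dA (U uv.1⁻¹) * substA cA (U uv.2)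
    else 0

/-- A semistandard skew tableau: a filling of a finite set of cells (the cells of a skew
diagram) whose rows are weakly increasing and whose columns are strictly increasing,
vanishing outside the cells.  Entries are shifted by `+1` relative to the paper, as for
`SemistandardYoungTableau`. -/
structure SkewTab where
  cells : Finset (ℕ × ℕ)
  entry : ℕ → ℕ → ℕ
  row_weak : ∀ ⦃i j1 j2 : ℕ⦄, j1 < j2 → (i, j1) ∈ cells → (i, j2) ∈ cells →
    entry i j1 ≤ entry i j2
  col_strict : ∀ ⦃i1 i2 j : ℕ⦄, i1 < i2 → (i1, j) ∈ cells → (i2, j) ∈ cells →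
    entry i1 j < entry i2 j
  zeros : ∀ ⦃i j : ℕ⦄, (i, j) ∉ cells → entry i j = 0

/-- The cells of the 180-degree rotation of the Young diagram `α`, taken inside its
minimal bounding rectangle (`a = ` number of rows, `b = ` number of columns):
the cell `(i, j)` belongs to the rotation iff `(a-1-i, b-1-j) ∈ α`. -/
def rotCells (α : YoungDiagram) : Finset (ℕ × ℕ) :=
  (Finset.range (α.colLen 0) ×ˢ Finset.range (α.rowLen 0)).filter
    (fun p => (α.colLen 0 - 1 - p.1, α.rowLen 0 - 1 - p.2) ∈ α)

/-- The column word of a skew tableau: the entries of each column are read from bottom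
to top, the columns being taken from left to right (entries shifted by `+1`). -/
def SkewTab.colWord (T : SkewTab) : List ℕ :=
  (List.range ((T.cells.sup fun p => p.2) + 1)).flatMap fun j =>
    (((List.range ((T.cells.sup fun p => p.1) + 1)).reverse).filter
        (fun i => (i, j) ∈ T.cells)).map fun i => T.entry i j + 1


/-! ### Auxiliary lemmas for Statement 9 -/

/-! Part 1: words and length -/

lemma sT_apply (i x : ℕ) : sT i x = if x = i then i + 1 else if x = i + 1 then i else x := by
  simp [sT, Equiv.swap_apply_def]

lemma sT_mul_self (i : ℕ) : sT i * sT i = 1 := Equiv.swap_mul_self _ _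

lemma sT_inv (i : ℕ) : (sT i)⁻¹ = sT i := by simp [sT]

@[simp] lemma wordProd_nil : wordProd [] = 1 := rfl

lemma wordProd_cons (e : ℕ) (l : List ℕ) : wordProd (e :: l) = sT e * wordProd l := by
  simp [wordProd]

lemma wordProd_append (l m : List ℕ) : wordProd (l ++ m) = wordProd l * wordProd m := by
  simp [wordProd]

lemma wordProd_singleton (e : ℕ) : wordProd [e] = sT e := by simp [wordProd]

lemma wordProd_reverse (l : List ℕ) : wordProd l.reverse = (wordProd l)⁻¹ := by
  induction l with
  | nil => simp
  | cons e l ih =>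
      rw [List.reverse_cons, wordProd_append, ih, wordProd_singleton, wordProd_cons,
        mul_inv_rev, sT_inv]

lemma len_le {w : Perm'} {l : List ℕ} (h : wordProd l = w) : len w ≤ l.length :=
  Nat.sInf_le ⟨l, h, rfl⟩

lemma exists_reducedWord {w : Perm'} {l : List ℕ} (h : wordProd l = w) :
    ∃ m, IsReducedWord w m := by
  obtain ⟨l', h1, h2⟩ := Nat.sInf_mem (⟨l.length, l, h, rfl⟩ :
    {m | ∃ l : List ℕ, wordProd l = w ∧ l.length = m}.Nonempty)
  exact ⟨l', h1, h2⟩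

@[simp] lemma len_one : len (1 : Perm') = 0 :=
  Nat.le_zero.mp (len_le (w := 1) (l := []) rfl)

/-! Bounded permutations and inversions -/

def Bdd (N : ℕ) (v : Perm') : Prop := ∀ k, N ≤ k → v k = k

lemma Bdd.lt {N : ℕ} {v : Perm'} (h : Bdd N v) {k : ℕ} (hk : k < N) : v k < N := by
  by_contra hge
  push_neg at hge
  have := h _ hge
  have : v (v k) = v k := h _ hge
  have : v k = k := v.injective this
  omega

lemma Bdd.one (N : ℕ) : Bdd N (1 : Perm') := fun _ _ => rfl

lemma Bdd.sT {N e : ℕ} (h : e + 1 < N) : Bdd N (sT e) := by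
  intro k hk; rw [sT_apply]; split_ifs <;> omega

lemma Bdd.mul {N : ℕ} {u v : Perm'} (hu : Bdd N u) (hv : Bdd N v) : Bdd N (u * v) := by
  intro k hk; rw [Equiv.Perm.mul_apply, hv k hk, hu k hk]

lemma Bdd.mono {N M : ℕ} {v : Perm'} (h : Bdd N v) (hNM : N ≤ M) : Bdd M v :=
  fun k hk => h k (le_trans hNM hk)

def Finv (v : Perm') (N : ℕ) : Finset (ℕ × ℕ) :=
  (Finset.range N ×ˢ Finset.range N).filter fun p => p.1 < p.2 ∧ v p.2 < v p.1

lemma mem_Finv {v : Perm'} {N : ℕ} {p : ℕ × ℕ} :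
    p ∈ Finv v N ↔ p.1 < N ∧ p.2 < N ∧ p.1 < p.2 ∧ v p.2 < v p.1 := by
  simp [Finv, and_assoc]

lemma Finv_eq_of_bdd {v : Perm'} {N M : ℕ} (h : Bdd N v) (hNM : N ≤ M) :
    Finv v M = Finv v N := by
  ext p
  rw [mem_Finv, mem_Finv]
  constructor
  · rintro ⟨-, -, h1, h2⟩
    refine ⟨?_, ?_, h1, h2⟩ <;>
    · by_contra hc
      push_neg at hc
      have hp2 : N ≤ p.2 := by omega
      have hv2 : v p.2 = p.2 := h _ hp2
      rcases lt_or_ge p.1 N with hlt | hge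
      · have := h.lt hlt; omega
      · have := h _ hge; omega
  · rintro ⟨a, b, c, d⟩; exact ⟨by omega, by omega, c, d⟩


/-! step lemma -/


lemma sT_left (e : ℕ) : sT e e = e + 1 := by rw [sT_apply]; simp

lemma sT_right (e : ℕ) : sT e (e + 1) = e := by
  rw [sT_apply, if_neg (by omega), if_pos rfl]

lemma sT_fix {e x : ℕ} (h1 : x ≠ e) (h2 : x ≠ e + 1) : sT e x = x := by
  rw [sT_apply, if_neg h1, if_neg h2]

lemma sT_sT (e x : ℕ) : sT e (sT e x) = x := Equiv.swap_apply_self _ _ _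

lemma Finv_mul_sT_of_lt {u : Perm'} {e N : ℕ} (hN : e + 1 < N) (h : u e < u (e + 1)) :
    (Finv (u * sT e) N).card = (Finv u N).card + 1 := by
  classical
  have hmem : (e, e + 1) ∈ Finv (u * sT e) N := by
    rw [mem_Finv]
    refine ⟨by omega, hN, by omega, ?_⟩
    simp only [Equiv.Perm.mul_apply, sT_left, sT_right]
    exact h
  have hnmem : (e, e + 1) ∉ Finv u N := by
    rw [mem_Finv]; push_neg; intro _ _ _; exact le_of_lt h
  have hcard : ((Finv (u * sT e) N).erase (e, e + 1)).card = (Finv u N).card := by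
    apply Finset.card_bij' (i := fun p _ => (sT e p.1, sT e p.2))
      (j := fun p _ => (sT e p.1, sT e p.2))
    · intro p hp
      rw [Finset.mem_erase, mem_Finv] at hp
      obtain ⟨hne, h1, h2, h3, h4⟩ := hp
      have hne' : ¬(p.1 = e ∧ p.2 = e + 1) := fun hc => hne (Prod.ext hc.1 hc.2)
      rw [mem_Finv]
      simp only [Equiv.Perm.mul_apply] at h4
      refine ⟨?_, ?_, ?_, h4⟩ <;> (simp only [sT_apply]; split_ifs <;> omega)
    · intro p hp
      rw [mem_Finv] at hp
      obtain ⟨h1, h2, h3, h4⟩ := hp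
      rw [Finset.mem_erase, mem_Finv]
      have hpe : ¬(p.1 = e ∧ p.2 = e + 1) := by
        rintro ⟨a, b⟩; rw [a, b] at h4; omega
      constructor
      · intro hc
        have hc1 : sT e p.1 = e := congrArg Prod.fst hc
        have hc2 : sT e p.2 = e + 1 := congrArg Prod.snd hc
        rw [sT_apply] at hc1 hc2
        split_ifs at hc1 hc2 <;> omega
      refine ⟨?_, ?_, ?_, ?_⟩
      · simp only [sT_apply]; split_ifs <;> omega
      · simp only [sT_apply]; split_ifs <;> omega
      · simp only [sT_apply]; split_ifs <;> omega
      · simp only [Equiv.Perm.mul_apply, sT_sT]; exact h4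
    · intro p _; simp [sT_sT]
    · intro p _; simp [sT_sT]
  have := Finset.card_erase_of_mem hmem
  have hpos : 0 < (Finv (u * sT e) N).card := Finset.card_pos.mpr ⟨_, hmem⟩
  omega

lemma Finv_mul_sT_of_gt {u : Perm'} {e N : ℕ} (hN : e + 1 < N) (h : u (e + 1) < u e) :
    (Finv u N).card = (Finv (u * sT e) N).card + 1 := by
  have key := Finv_mul_sT_of_lt (u := u * sT e) hN (by
    simp only [Equiv.Perm.mul_apply, sT_left, sT_right]
    exact h)
  have huu : u * sT e * sT e = u := by
    rw [mul_assoc, show sT e * sT e = 1 from Equiv.swap_mul_self _ _, mul_one]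
  rw [huu] at key
  exact key


/-! length equals inversion number -/

lemma card_Finv_wordProd_le {N : ℕ} (l : List ℕ) (hl : ∀ e ∈ l, e + 1 < N) :
    (Finv (wordProd l) N).card ≤ l.length := by
  induction l using List.reverseRecOn with
  | nil =>
      have h0 : Finv (1 : Perm') N = ∅ := by
        ext p; rw [mem_Finv]; simp only [Finset.notMem_empty, iff_false]
        rintro ⟨-, -, h1, h2⟩
        simp only [Equiv.Perm.one_apply] at h2; omega
      simp [wordProd_nil, h0]
  | append_singleton l' e ih =>
      have hE : e + 1 < N := hl e (by simp)
      have ih' := ih (fun x hx => hl x (by simp [hx]))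
      rw [wordProd_append, wordProd_singleton]
      set u := wordProd l' with hu
      rcases lt_or_ge (u e) (u (e + 1)) with hlt | hle
      · have := Finv_mul_sT_of_lt hE hlt
        simp only [List.length_append, List.length_singleton]
        omega
      · have hne : u (e + 1) ≠ u e := fun hc => by
          have := u.injective hc; omega
        have hgt : u (e + 1) < u e := lt_of_le_of_ne hle hne
        have := Finv_mul_sT_of_gt hE hgt
        simp only [List.length_append, List.length_singleton]
        omega

lemma Finv_one_empty (N : ℕ) : Finv (1 : Perm') N = ∅ := by
  ext p; rw [mem_Finv]; simp only [Finset.notMem_empty, iff_false]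
  rintro ⟨-, -, h1, h2⟩
  simp only [Equiv.Perm.one_apply] at h2; omega

lemma exists_word_of_bdd {N : ℕ} (v : Perm') (hv : Bdd N v) :
    ∃ l, wordProd l = v ∧ l.length = (Finv v N).card ∧ ∀ e ∈ l, e + 1 < N := by
  generalize hc : (Finv v N).card = c
  induction c generalizing v with
  | zero =>
      have hmono : StrictMono (⇑v) := by
        intro i j hij
        rcases lt_or_ge j N with hj | hj
        · rcases lt_or_ge i N with hi | hi
          · by_contra hc2
            push_neg at hc2
            have hne : v i ≠ v j := fun h => by have := v.injective h; omega
            have hvji : v j < v i := lt_of_le_of_ne hc2 (fun h => hne h.symm)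
            have : (i, j) ∈ Finv v N := mem_Finv.mpr ⟨hi, hj, hij, hvji⟩
            rw [Finset.card_eq_zero.mp hc] at this
            exact absurd this (Finset.notMem_empty _)
          · omega
        · rw [hv j hj]
          rcases lt_or_ge i N with hi | hi
          · exact lt_of_lt_of_le (hv.lt hi) hj
          · rw [hv i hi]; exact hij
      have hmono' : StrictMono (⇑v⁻¹) := by
        intro a b hab
        rcases lt_trichotomy (v⁻¹ a) (v⁻¹ b) with h | h | h
        · exact h
        · exfalso; have : a = b := by
            have := congrArg v h; simpa using this
          omega
        · exfalso
          have := hmono h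
          simp only [Equiv.Perm.coe_inv, Equiv.apply_symm_apply] at this
          omega
      have : v = 1 := by
        ext k
        have h1 : k ≤ v k := hmono.le_apply
        have h2 : k ≤ v⁻¹ k := hmono'.le_apply
        have h3 : v k ≤ v (v⁻¹ k) := hmono.monotone h2
        simp only [Equiv.Perm.coe_inv, Equiv.apply_symm_apply] at h3
        simpa using le_antisymm h3 h1
      exact ⟨[], by rw [this, wordProd_nil], by simp [hc], by simp⟩
  | succ c ih =>
      have hdesc : ∃ e, v (e + 1) < v e := by
        by_contra hno
        push_neg at hno
        have hmono : StrictMono (⇑v) := by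
          apply strictMono_nat_of_lt_succ
          intro m
          have hne : v m ≠ v (m + 1) := fun h => by have := v.injective h; omega
          have := hno m
          omega
        have : Finv v N = ∅ := by
          ext p; rw [mem_Finv]; simp only [Finset.notMem_empty, iff_false]
          rintro ⟨-, -, h1, h2⟩
          have := hmono h1; omega
        rw [this] at hc; simp at hc
      obtain ⟨e, he⟩ := hdesc
      have hEN : e + 1 < N := by
        rcases lt_or_ge (e + 1) N with h | h
        · exact h
        · exfalso
          rcases lt_or_ge e N with h2 | h2
          · have h3 : v (e + 1) = e + 1 := hv _ (by omega)
            have := hv.lt h2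
            omega
          · have h3 : v (e + 1) = e + 1 := hv _ (by omega)
            have h4 : v e = e := hv _ h2
            omega
      have hv' : Bdd N (v * sT e) := hv.mul (Bdd.sT hEN)
      have hcard := Finv_mul_sT_of_gt hEN he
      rw [hc] at hcard
      obtain ⟨l', hl1, hl2, hl3⟩ := ih (v * sT e) hv' (by omega)
      refine ⟨l' ++ [e], ?_, ?_, ?_⟩
      · rw [wordProd_append, wordProd_singleton, hl1, mul_assoc,
          show sT e * sT e = 1 from Equiv.swap_mul_self _ _, mul_one]
      · simp [hl2]
      · intro x hx
        rcases List.mem_append.mp hx with h | h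
        · exact hl3 x h
        · simp only [List.mem_singleton] at h; omega

lemma len_eq_card_Finv {N : ℕ} {v : Perm'} (hv : Bdd N v) :
    len v = (Finv v N).card := by
  obtain ⟨l0, hl0, hlen0, -⟩ := exists_word_of_bdd v hv
  refine le_antisymm (hlen0 ▸ len_le hl0) ?_
  obtain ⟨m, hm, hmlen⟩ := exists_reducedWord hl0
  have hM : ∀ e ∈ m, e + 1 < N + m.sum + 2 := by
    intro e hemem
    have : e ≤ m.sum := List.single_le_sum (fun x _ => Nat.zero_le x) e hemem
    omega
  have h1 : (Finv v (N + m.sum + 2)).card ≤ m.length := hm ▸ card_Finv_wordProd_le m hM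
  have h2 : Finv v (N + m.sum + 2) = Finv v N := Finv_eq_of_bdd hv (by omega)
  rw [h2] at h1
  omega

/-! MemS facts -/

lemma MemS.bdd {n : ℕ} {v : Perm'} (h : MemS (n + 1) v) : Bdd (n + 2) v :=
  fun k hk => h.2 k (by omega)

lemma MemS.mul {n : ℕ} {u v : Perm'} (hu : MemS n u) (hv : MemS n v) : MemS n (u * v) :=
  ⟨by rw [Equiv.Perm.mul_apply, hv.1, hu.1], fun k hk => by
    rw [Equiv.Perm.mul_apply, hv.2 k hk, hu.2 k hk]⟩

lemma MemS.inv {n : ℕ} {v : Perm'} (hv : MemS n v) : MemS n v⁻¹ := by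
  constructor
  · apply v.injective; simp [hv.1]
  · intro k hk
    apply v.injective; simp [hv.2 k hk]

lemma MemS.exists_word {n : ℕ} {v : Perm'} (hv : MemS (n + 1) v) :
    ∃ l, wordProd l = v := by
  obtain ⟨l, hl, -, -⟩ := exists_word_of_bdd v hv.bdd
  exact ⟨l, hl⟩

lemma descent_bounds {n : ℕ} {v : Perm'} (hv : MemS (n + 1) v) {e : ℕ}
    (hd : v (e + 1) < v e) : 1 ≤ e ∧ e ≤ n := by
  have hB := hv.bdd
  constructor
  · by_contra hc
    push_neg at hc
    interval_cases e
    rw [hv.1] at hd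
    omega
  · by_contra hc
    push_neg at hc
    rcases lt_or_ge e (n + 2) with h2 | h2
    · have h3 : v (e + 1) = e + 1 := hB _ (by omega)
      have := hB.lt h2
      omega
    · have h3 : v (e + 1) = e + 1 := hB _ (by omega)
      have h4 : v e = e := hB _ h2
      omega

/-! reduced words of elements of `S_{n+1}` use letters in `[1, n]` -/

lemma reduced_letters {n : ℕ} {l : List ℕ} {v : Perm'} (hv : MemS (n + 1) v)
    (hred : IsReducedWord v l) : ∀ e ∈ l, 1 ≤ e ∧ e ≤ n := by
  induction l using List.reverseRecOn generalizing v with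
  | nil => simp
  | append_singleton l' e ih =>
      obtain ⟨hprod, hlen⟩ := hred
      rw [wordProd_append, wordProd_singleton] at hprod
      have hlen' : (l' ++ [e]).length = l'.length + 1 := by simp
      have hprod' : wordProd l' = v * sT e := by
        rw [← hprod, mul_assoc, show sT e * sT e = 1 from Equiv.swap_mul_self _ _, mul_one]
      set v' := v * sT e with hv'def
      have hlenv' : len v' = l'.length := by
        have h1 : len v' ≤ l'.length := len_le hprod'
        obtain ⟨m, hm1, hm2⟩ := exists_reducedWord hprod'
        have hword : wordProd (m ++ [e]) = v := by
          rw [wordProd_append, wordProd_singleton, hm1, hv'def, mul_assoc,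
            show sT e * sT e = 1 from Equiv.swap_mul_self _ _, mul_one]
        have h2 : len v ≤ m.length + 1 := by
          have := len_le hword; simpa using this
        omega
      have hdesc : v (e + 1) < v e := by
        have hne : v e ≠ v (e + 1) := fun h => by have := v.injective h; omega
        by_contra hc
        push_neg at hc
        have hlt : v e < v (e + 1) := lt_of_le_of_ne hc hne
        -- then v' has a descent at e and len v' = len v + 1, contradiction
        set M := n + e + 4 with hM
        have hBv : Bdd M v := hv.bdd.mono (by omega)
        have hB' : Bdd M v' := hBv.mul (Bdd.sT (by omega))
        have hgt : v' (e + 1) < v' e := by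
          simp only [hv'def, Equiv.Perm.mul_apply, sT_left, sT_right]
          exact hlt
        have hstep := Finv_mul_sT_of_gt (u := v') (by omega : e + 1 < M) hgt
        have hvv : v' * sT e = v := by
          rw [hv'def, mul_assoc, show sT e * sT e = 1 from Equiv.swap_mul_self _ _, mul_one]
        rw [hvv] at hstep
        have e1 := len_eq_card_Finv hBv
        have e2 := len_eq_card_Finv hB'
        rw [hlen'] at hlen
        omega
      have hbounds := descent_bounds hv hdesc
      have hvmem2 : MemS (n + 1) v' :=
        hv.mul ⟨sT_fix (by omega) (by omega), fun k hk => sT_fix (by omega) (by omega)⟩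
      have ihl := ih hvmem2 ⟨hprod', hlenv'.symm⟩
      intro x hx
      rcases List.mem_append.mp hx with h | h
      · exact ihl x h
      · simp only [List.mem_singleton] at h; subst h; exact hbounds

/-! ### The longest element and conjugation of words -/

lemma longest_apply (N k : ℕ) :
    longest N k = if 1 ≤ k ∧ k ≤ N then N + 1 - k else k := rfl

lemma longest_mul_self (N : ℕ) : longest N * longest N = 1 := by
  ext k
  simp only [Equiv.Perm.mul_apply, longest_apply, Equiv.Perm.one_apply]
  split_ifs <;> omega

lemma longest_inv (N : ℕ) : (longest N)⁻¹ = longest N :=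
  inv_eq_of_mul_eq_one_left (longest_mul_self N)

lemma MemS_longest (N : ℕ) : MemS N (longest N) := by
  constructor
  · rw [longest_apply]; simp
  · intro k hk; rw [longest_apply, if_neg (by omega)]

lemma conj_sT {n e : ℕ} (h1 : 1 ≤ e) (h2 : e ≤ n) :
    longest (n + 1) * sT e * longest (n + 1) = sT (n + 1 - e) := by
  have key : Equiv.swap (longest (n + 1) e) (longest (n + 1) (e + 1)) =
      longest (n + 1) * Equiv.swap e (e + 1) * (longest (n + 1))⁻¹ :=
    Equiv.swap_apply_apply _ _ _
  rw [longest_inv] at key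
  rw [sT, ← key, longest_apply, longest_apply, if_pos (by omega), if_pos (by omega)]
  rw [show n + 1 + 1 - e = n + 1 - e + 1 by omega, sT, Equiv.swap_comm,
    show n + 1 + 1 - (e + 1) = n + 1 - e by omega]

lemma wordProd_map_compl {n : ℕ} {l : List ℕ} (h : ∀ e ∈ l, 1 ≤ e ∧ e ≤ n) :
    wordProd (l.map (fun e => n + 1 - e)) =
      longest (n + 1) * wordProd l * longest (n + 1) := by
  induction l with
  | nil => simp [longest_mul_self]
  | cons e l ih =>
      have he := h e (by simp)
      have ihl := ih (fun x hx => h x (by simp [hx]))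
      simp only [List.map_cons, wordProd_cons, ihl, ← conj_sT he.1 he.2]
      have hls := longest_mul_self (n + 1)
      calc longest (n + 1) * sT e * longest (n + 1) *
            (longest (n + 1) * wordProd l * longest (n + 1))
          = longest (n + 1) * sT e * (longest (n + 1) * longest (n + 1)) * wordProd l *
              longest (n + 1) := by group
        _ = longest (n + 1) * (sT e * wordProd l) * longest (n + 1) := by rw [hls]; group

lemma len_inv_le {v : Perm'} {l : List ℕ} (hword : wordProd l = v) : len v⁻¹ ≤ len v := by
  obtain ⟨m, hm1, hm2⟩ := exists_reducedWord hword
  have : wordProd m.reverse = v⁻¹ := by rw [wordProd_reverse, hm1]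
  have := len_le this
  simpa [hm2] using this

lemma len_inv {n : ℕ} {v : Perm'} (hv : MemS (n + 1) v) : len v⁻¹ = len v := by
  obtain ⟨l, hl⟩ := hv.exists_word
  obtain ⟨l', hl'⟩ := hv.inv.exists_word
  have h1 := len_inv_le hl
  have h2 := len_inv_le hl'
  rw [inv_inv] at h2
  omega

lemma len_conj {n : ℕ} {v : Perm'} (hv : MemS (n + 1) v) :
    len (longest (n + 1) * v * longest (n + 1)) = len v := by
  have key : ∀ u : Perm', MemS (n + 1) u →
      len (longest (n + 1) * u * longest (n + 1)) ≤ len u := by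
    intro u hu
    obtain ⟨l, hl⟩ := hu.exists_word
    obtain ⟨m, hm1, hm2⟩ := exists_reducedWord hl
    have hlet := reduced_letters hu ⟨hm1, hm2⟩
    have := wordProd_map_compl (n := n) hlet
    rw [hm1] at this
    have := len_le this
    simpa [hm2] using this
  have hconj : MemS (n + 1) (longest (n + 1) * v * longest (n + 1)) :=
    ((MemS_longest (n + 1)).mul hv).mul (MemS_longest (n + 1))
  have h2 := key _ hconj
  have heq : longest (n + 1) * (longest (n + 1) * v * longest (n + 1)) * longest (n + 1)
      = v := by
    have hls := longest_mul_self (n + 1)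
    calc longest (n + 1) * (longest (n + 1) * v * longest (n + 1)) * longest (n + 1)
        = (longest (n + 1) * longest (n + 1)) * v *
            (longest (n + 1) * longest (n + 1)) := by group
      _ = v := by rw [hls]; group
  rw [heq] at h2
  exact le_antisymm (key v hv) h2

lemma word_corr_fwd {n : ℕ} {w : Perm'} {l : List ℕ} (hw : MemS (n + 1) w)
    (h : IsReducedWord (longest (n + 1) * w⁻¹ * longest (n + 1)) l) :
    IsReducedWord w (l.reverse.map (fun e => n + 1 - e)) := by
  set w₀ := longest (n + 1) with hw₀
  have hv : MemS (n + 1) (w₀ * w⁻¹ * w₀) :=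
    ((MemS_longest (n + 1)).mul hw.inv).mul (MemS_longest (n + 1))
  have hlet := reduced_letters hv h
  have hletrev : ∀ e ∈ l.reverse, 1 ≤ e ∧ e ≤ n := fun e he =>
    hlet e (List.mem_reverse.mp he)
  constructor
  · rw [wordProd_map_compl hletrev, wordProd_reverse, h.1]
    have hls := longest_mul_self (n + 1)
    calc w₀ * (w₀ * w⁻¹ * w₀)⁻¹ * w₀ = w₀ * (w₀⁻¹ * w * w₀⁻¹) * w₀ := by group
      _ = w₀ * (w₀ * w * w₀) * w₀ := by rw [longest_inv]
      _ = (w₀ * w₀) * w * (w₀ * w₀) := by group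
      _ = w := by rw [hls]; group
  · have hlen : (l.reverse.map (fun e => n + 1 - e)).length = l.length := by simp
    rw [hlen, h.2]
    rw [len_conj hw.inv, len_inv hw]

lemma word_corr_bwd {n : ℕ} {w : Perm'} {m : List ℕ} (hw : MemS (n + 1) w)
    (h : IsReducedWord w m) :
    IsReducedWord (longest (n + 1) * w⁻¹ * longest (n + 1))
      (m.reverse.map (fun e => n + 1 - e)) := by
  set w₀ := longest (n + 1) with hw₀
  have hlet := reduced_letters hw h
  have hletrev : ∀ e ∈ m.reverse, 1 ≤ e ∧ e ≤ n := fun e he =>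
    hlet e (List.mem_reverse.mp he)
  constructor
  · rw [wordProd_map_compl hletrev, wordProd_reverse, h.1]
  · have hlen : (m.reverse.map (fun e => n + 1 - e)).length = m.length := by simp
    rw [hlen, h.2, len_conj hw.inv, len_inv hw]

lemma revmap_revmap {n : ℕ} {l : List ℕ} (h : ∀ e ∈ l, 1 ≤ e ∧ e ≤ n) :
    ((l.reverse.map (fun e => n + 1 - e)).reverse.map (fun e => n + 1 - e)) = l := by
  rw [List.map_reverse, List.map_map, List.map_reverse, List.reverse_reverse]
  have hcc : ∀ e ∈ l, ((fun e => n + 1 - e) ∘ (fun e => n + 1 - e)) e = id e := by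
    intro e he
    have := h e he
    simp only [Function.comp_apply, id_eq]
    omega
  calc l.map ((fun e => n + 1 - e) ∘ (fun e => n + 1 - e))
      = l.map id := List.map_congr_left hcc
    _ = l := List.map_id l


lemma SkewTab.ext' {U V : SkewTab} (h1 : U.cells = V.cells) (h2 : U.entry = V.entry) :
    U = V := by
  cases U; cases V
  simp only at h1 h2
  subst h1; subst h2
  rfl

lemma cell_lt {μ : YoungDiagram} {i j : ℕ} (h : (i, j) ∈ μ) :
    i < μ.colLen 0 ∧ j < μ.rowLen 0 :=
  ⟨lt_of_lt_of_le (YoungDiagram.mem_iff_lt_colLen.mp h) (μ.colLen_anti _ _ (Nat.zero_le j)),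
   lt_of_lt_of_le (YoungDiagram.mem_iff_lt_rowLen.mp h) (μ.rowLen_anti _ _ (Nat.zero_le i))⟩

lemma mem_rotCells {μ : YoungDiagram} {p : ℕ × ℕ} :
    p ∈ rotCells μ ↔ p.1 < μ.colLen 0 ∧ p.2 < μ.rowLen 0 ∧
      (μ.colLen 0 - 1 - p.1, μ.rowLen 0 - 1 - p.2) ∈ μ := by
  simp [rotCells, and_assoc]

lemma mem_colWord {μ : YoungDiagram} (T : SemistandardYoungTableau μ) {i j : ℕ}
    (h : (i, j) ∈ μ) : T i j + 1 ∈ colWord T := by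
  have hj : j < μ.rowLen 0 := (cell_lt h).2
  have hi : i < μ.colLen j := YoungDiagram.mem_iff_lt_colLen.mp h
  unfold colWord
  rw [List.mem_flatMap]
  exact ⟨j, List.mem_range.mpr hj,
    List.mem_map.mpr ⟨i, List.mem_reverse.mpr (List.mem_range.mpr hi), rfl⟩⟩

lemma colWord_letters {μ : YoungDiagram} (T : SemistandardYoungTableau μ) {x : ℕ}
    (hx : x ∈ colWord T) : ∃ i j, (i, j) ∈ μ ∧ x = T i j + 1 := by
  unfold colWord at hx
  rw [List.mem_flatMap] at hx
  obtain ⟨j, hj, hx⟩ := hx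
  rw [List.mem_map] at hx
  obtain ⟨i, hi, hx⟩ := hx
  rw [List.mem_reverse, List.mem_range] at hi
  exact ⟨i, j, YoungDiagram.mem_iff_lt_colLen.mpr hi, hx.symm⟩

lemma SkewTab.mem_colWord (U : SkewTab) {i j : ℕ} (h : (i, j) ∈ U.cells) :
    U.entry i j + 1 ∈ U.colWord := by
  unfold SkewTab.colWord
  rw [List.mem_flatMap]
  refine ⟨j, List.mem_range.mpr (Nat.lt_succ_of_le (Finset.le_sup (f := fun p : ℕ × ℕ => p.2) h)), ?_⟩
  rw [List.mem_map]
  refine ⟨i, ?_, rfl⟩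
  rw [List.mem_filter]
  refine ⟨?_, decide_eq_true h⟩
  rw [List.mem_reverse, List.mem_range]
  exact Nat.lt_succ_of_le (Finset.le_sup (f := fun p : ℕ × ℕ => p.1) h)

lemma SkewTab.colWord_letters (U : SkewTab) {x : ℕ} (hx : x ∈ U.colWord) :
    ∃ i j, (i, j) ∈ U.cells ∧ x = U.entry i j + 1 := by
  unfold SkewTab.colWord at hx
  rw [List.mem_flatMap] at hx
  obtain ⟨j, hj, hx⟩ := hx
  rw [List.mem_map] at hx
  obtain ⟨i, hi, hx⟩ := hx
  rw [List.mem_filter] at hi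
  exact ⟨i, j, of_decide_eq_true hi.2, hx.symm⟩

lemma range_reverse (n : ℕ) :
    (List.range n).reverse = (List.range n).map (fun k => n - 1 - k) := by
  apply List.ext_getElem (by simp)
  intro i h1 h2
  simp only [List.getElem_reverse, List.getElem_range, List.getElem_map, List.length_range]

lemma filter_range_reverse (a c : ℕ) (hc : c ≤ a) :
    ((List.range a).reverse.filter (fun i => decide (a - c ≤ i))) =
      (List.range c).map (fun t => a - 1 - t) := by
  have hsplit : List.range a = List.range (a - c) ++ (List.range c).map ((a - c) + ·) := by
    rw [show a = a - c + c by omega]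
    rw [List.range_add]
    rw [show a - c + c - c = a - c by omega]
  rw [hsplit, List.reverse_append, List.filter_append]
  have h1 : ((List.range c).map ((a - c) + ·)).reverse.filter (fun i => decide (a - c ≤ i)) =
      ((List.range c).map ((a - c) + ·)).reverse := by
    rw [List.filter_eq_self]
    intro x hx
    rw [List.mem_reverse, List.mem_map] at hx
    obtain ⟨t, ht, hxt⟩ := hx
    exact decide_eq_true (by omega)
  have h2 : (List.range (a - c)).reverse.filter (fun i => decide (a - c ≤ i)) = [] := by
    rw [List.filter_eq_nil_iff]
    intro x hx
    rw [List.mem_reverse, List.mem_range] at hx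
    simp only [decide_eq_true_eq]
    omega
  rw [h1, h2, List.append_nil]
  rw [← List.map_reverse, range_reverse, List.map_map]
  apply List.map_congr_left
  intro t ht
  rw [List.mem_range] at ht
  simp only [Function.comp_apply]
  omega

/-! ### Rotation of tableaux -/

def rotSkew {μ : YoungDiagram} (n : ℕ) (T : SemistandardYoungTableau μ)
    (hT : ∀ i j, (i, j) ∈ μ → T i j + 1 ≤ n) : SkewTab where
  cells := rotCells μ
  entry i j := if (i, j) ∈ rotCells μ then
      n - 1 - T (μ.colLen 0 - 1 - i) (μ.rowLen 0 - 1 - j) else 0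
  row_weak := by
    intro i j1 j2 hj h1 h2
    beta_reduce
    rw [if_pos h1, if_pos h2]
    rw [mem_rotCells] at h1 h2
    dsimp only at h1 h2
    have hw := T.row_weak (show μ.rowLen 0 - 1 - j2 < μ.rowLen 0 - 1 - j1 by omega) h1.2.2
    exact Nat.sub_le_sub_left hw _
  col_strict := by
    intro i1 i2 j hi h1 h2
    beta_reduce
    rw [if_pos h1, if_pos h2]
    rw [mem_rotCells] at h1 h2
    dsimp only at h1 h2
    have hs := T.col_strict (show μ.colLen 0 - 1 - i2 < μ.colLen 0 - 1 - i1 by omega) h1.2.2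
    have hb := hT _ _ h1.2.2
    omega
  zeros := by
    intro i j h
    beta_reduce
    rw [if_neg h]

def unrot {μ : YoungDiagram} (n : ℕ) (U : SkewTab) (hc : U.cells = rotCells μ)
    (hU : ∀ i j, (i, j) ∈ U.cells → U.entry i j + 1 ≤ n) : SemistandardYoungTableau μ where
  entry i j := if (i, j) ∈ μ then
      n - 1 - U.entry (μ.colLen 0 - 1 - i) (μ.rowLen 0 - 1 - j) else 0
  row_weak' := by
    intro i j1 j2 hj h2
    have h1 : (i, j1) ∈ μ := μ.up_left_mem le_rfl (le_of_lt hj) h2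
    beta_reduce
    rw [if_pos h1, if_pos h2]
    obtain ⟨hia, hj2b⟩ := cell_lt h2
    obtain ⟨-, hj1b⟩ := cell_lt h1
    have m1 : (μ.colLen 0 - 1 - i, μ.rowLen 0 - 1 - j1) ∈ U.cells := by
      rw [hc, mem_rotCells]
      refine ⟨by omega, by omega, ?_⟩
      rw [show μ.colLen 0 - 1 - (μ.colLen 0 - 1 - i) = i by omega,
          show μ.rowLen 0 - 1 - (μ.rowLen 0 - 1 - j1) = j1 by omega]
      exact h1
    have m2 : (μ.colLen 0 - 1 - i, μ.rowLen 0 - 1 - j2) ∈ U.cells := by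
      rw [hc, mem_rotCells]
      refine ⟨by omega, by omega, ?_⟩
      rw [show μ.colLen 0 - 1 - (μ.colLen 0 - 1 - i) = i by omega,
          show μ.rowLen 0 - 1 - (μ.rowLen 0 - 1 - j2) = j2 by omega]
      exact h2
    have hw := U.row_weak (show μ.rowLen 0 - 1 - j2 < μ.rowLen 0 - 1 - j1 by omega) m2 m1
    omega
  col_strict' := by
    intro i1 i2 j hi h2
    have h1 : (i1, j) ∈ μ := μ.up_left_mem (le_of_lt hi) le_rfl h2
    beta_reduce
    rw [if_pos h1, if_pos h2]
    obtain ⟨hi2a, hjb⟩ := cell_lt h2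
    obtain ⟨hi1a, -⟩ := cell_lt h1
    have m1 : (μ.colLen 0 - 1 - i1, μ.rowLen 0 - 1 - j) ∈ U.cells := by
      rw [hc, mem_rotCells]
      refine ⟨by omega, by omega, ?_⟩
      rw [show μ.colLen 0 - 1 - (μ.colLen 0 - 1 - i1) = i1 by omega,
          show μ.rowLen 0 - 1 - (μ.rowLen 0 - 1 - j) = j by omega]
      exact h1
    have m2 : (μ.colLen 0 - 1 - i2, μ.rowLen 0 - 1 - j) ∈ U.cells := by
      rw [hc, mem_rotCells]
      refine ⟨by omega, by omega, ?_⟩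
      rw [show μ.colLen 0 - 1 - (μ.colLen 0 - 1 - i2) = i2 by omega,
          show μ.rowLen 0 - 1 - (μ.rowLen 0 - 1 - j) = j by omega]
      exact h2
    have hs := U.col_strict (show μ.colLen 0 - 1 - i2 < μ.colLen 0 - 1 - i1 by omega) m2 m1
    have hb := hU _ _ m1
    omega
  zeros' := by
    intro i j h
    beta_reduce
    rw [if_neg h]

lemma rotSkew_cells {μ : YoungDiagram} (n : ℕ) (T : SemistandardYoungTableau μ)
    (hT : ∀ i j, (i, j) ∈ μ → T i j + 1 ≤ n) : (rotSkew n T hT).cells = rotCells μ := rfl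

lemma rotSkew_entry {μ : YoungDiagram} (n : ℕ) (T : SemistandardYoungTableau μ)
    (hT : ∀ i j, (i, j) ∈ μ → T i j + 1 ≤ n) (i j : ℕ) :
    (rotSkew n T hT).entry i j = if (i, j) ∈ rotCells μ then
      n - 1 - T (μ.colLen 0 - 1 - i) (μ.rowLen 0 - 1 - j) else 0 := rfl

lemma rotSkew_colWord {μ : YoungDiagram} (n : ℕ) (T : SemistandardYoungTableau μ)
    (hT : ∀ i j, (i, j) ∈ μ → T i j + 1 ≤ n) :
    (rotSkew n T hT).colWord = ((colWord T).reverse).map (fun e => n + 1 - e) := by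
  have hR : ((colWord T).reverse).map (fun e => n + 1 - e) =
      (List.range (μ.rowLen 0)).flatMap (fun j =>
        (List.range (μ.colLen (μ.rowLen 0 - 1 - j))).map
          (fun i => n + 1 - (T i (μ.rowLen 0 - 1 - j) + 1))) := by
    unfold colWord
    rw [List.reverse_flatMap, List.map_flatMap, range_reverse, List.flatMap_map]
    apply List.flatMap_congr
    intro j hj
    simp only [Function.comp_apply]
    simp only [List.map_reverse, List.reverse_reverse, List.map_map]
    rfl
  rcases Nat.eq_zero_or_pos (μ.rowLen 0) with hb | hb
  · have hcells : rotCells μ = ∅ := by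
      ext p
      simp only [Finset.notMem_empty, iff_false, mem_rotCells, hb]
      rintro ⟨-, h2, -⟩
      omega
    rw [hR, hb]
    simp only [List.range_zero, List.flatMap_nil]
    unfold SkewTab.colWord
    simp [rotSkew_cells, hcells]
  · have h00 : (0, 0) ∈ μ := YoungDiagram.mem_iff_lt_rowLen.mpr hb
    have ha : 0 < μ.colLen 0 := (cell_lt h00).1
    have hcorner : (μ.colLen 0 - 1, μ.rowLen 0 - 1) ∈ rotCells μ := by
      rw [mem_rotCells]
      dsimp only
      refine ⟨by omega, by omega, ?_⟩
      rw [show μ.colLen 0 - 1 - (μ.colLen 0 - 1) = 0 by omega,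
        show μ.rowLen 0 - 1 - (μ.rowLen 0 - 1) = 0 by omega]
      exact h00
    have hsup2 : ((rotSkew n T hT).cells.sup fun p => p.2) + 1 = μ.rowLen 0 := by
      rw [rotSkew_cells]
      have hle : ((rotCells μ).sup fun p => p.2) ≤ μ.rowLen 0 - 1 := by
        apply Finset.sup_le
        intro p hp
        rw [mem_rotCells] at hp
        omega
      have hge : μ.rowLen 0 - 1 ≤ (rotCells μ).sup fun p => p.2 :=
        Finset.le_sup (f := fun p : ℕ × ℕ => p.2) hcorner
      omega
    have hsup1 : ((rotSkew n T hT).cells.sup fun p => p.1) + 1 = μ.colLen 0 := by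
      rw [rotSkew_cells]
      have hle : ((rotCells μ).sup fun p => p.1) ≤ μ.colLen 0 - 1 := by
        apply Finset.sup_le
        intro p hp
        rw [mem_rotCells] at hp
        omega
      have hge : μ.colLen 0 - 1 ≤ (rotCells μ).sup fun p => p.1 :=
        Finset.le_sup (f := fun p : ℕ × ℕ => p.1) hcorner
      omega
    unfold SkewTab.colWord
    rw [hsup1, hsup2, hR]
    apply List.flatMap_congr
    intro j hj
    rw [List.mem_range] at hj
    have hc1 : 1 ≤ μ.colLen (μ.rowLen 0 - 1 - j) := by
      have hm : (0, μ.rowLen 0 - 1 - j) ∈ μ := YoungDiagram.mem_iff_lt_rowLen.mpr (by omega)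
      exact YoungDiagram.mem_iff_lt_colLen.mp hm
    have hca : μ.colLen (μ.rowLen 0 - 1 - j) ≤ μ.colLen 0 := μ.colLen_anti _ _ (Nat.zero_le _)
    have hfil : ((List.range (μ.colLen 0)).reverse.filter
          (fun i => decide ((i, j) ∈ (rotSkew n T hT).cells))) =
        ((List.range (μ.colLen 0)).reverse.filter
          (fun i => decide (μ.colLen 0 - μ.colLen (μ.rowLen 0 - 1 - j) ≤ i))) := by
      apply List.filter_congr
      intro i hi
      rw [List.mem_reverse, List.mem_range] at hi
      apply decide_eq_decide.mpr
      rw [rotSkew_cells, mem_rotCells]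
      dsimp only
      constructor
      · rintro ⟨-, -, hm⟩
        have := YoungDiagram.mem_iff_lt_colLen.mp hm
        omega
      · intro hi2
        refine ⟨hi, by omega, ?_⟩
        rw [YoungDiagram.mem_iff_lt_colLen]
        omega
    rw [hfil, filter_range_reverse (μ.colLen 0) (μ.colLen (μ.rowLen 0 - 1 - j)) hca,
      List.map_map]
    apply List.map_congr_left
    intro t ht
    rw [List.mem_range] at ht
    simp only [Function.comp_apply]
    have hmem : (μ.colLen 0 - 1 - t, j) ∈ rotCells μ := by
      rw [mem_rotCells]
      dsimp only
      refine ⟨by omega, by omega, ?_⟩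
      rw [show μ.colLen 0 - 1 - (μ.colLen 0 - 1 - t) = t by omega]
      rw [YoungDiagram.mem_iff_lt_colLen]
      omega
    have hmem2 : (t, μ.rowLen 0 - 1 - j) ∈ μ := by
      rw [YoungDiagram.mem_iff_lt_colLen]
      omega
    have hbound := hT _ _ hmem2
    rw [rotSkew_entry, if_pos hmem, show μ.colLen 0 - 1 - (μ.colLen 0 - 1 - t) = t by omega]
    omega

lemma unrot_entry {μ : YoungDiagram} (n : ℕ) (U : SkewTab) (hc : U.cells = rotCells μ)
    (hU : ∀ i j, (i, j) ∈ U.cells → U.entry i j + 1 ≤ n) (i j : ℕ) :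
    (unrot n U hc hU) i j = if (i, j) ∈ μ then
      n - 1 - U.entry (μ.colLen 0 - 1 - i) (μ.rowLen 0 - 1 - j) else 0 := rfl

lemma unrot_rotSkew {μ : YoungDiagram} (n : ℕ) (T : SemistandardYoungTableau μ)
    (hT : ∀ i j, (i, j) ∈ μ → T i j + 1 ≤ n) (hc : (rotSkew n T hT).cells = rotCells μ)
    (hU : ∀ i j, (i, j) ∈ (rotSkew n T hT).cells → (rotSkew n T hT).entry i j + 1 ≤ n) :
    unrot n (rotSkew n T hT) hc hU = T := by
  apply SemistandardYoungTableau.ext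
  intro i j
  rw [unrot_entry]
  by_cases hm : (i, j) ∈ μ
  · rw [if_pos hm, rotSkew_entry]
    obtain ⟨hia, hjb⟩ := cell_lt hm
    have hrot : (μ.colLen 0 - 1 - i, μ.rowLen 0 - 1 - j) ∈ rotCells μ := by
      rw [mem_rotCells]
      dsimp only
      refine ⟨by omega, by omega, ?_⟩
      rw [show μ.colLen 0 - 1 - (μ.colLen 0 - 1 - i) = i by omega,
          show μ.rowLen 0 - 1 - (μ.rowLen 0 - 1 - j) = j by omega]
      exact hm
    rw [if_pos hrot, show μ.colLen 0 - 1 - (μ.colLen 0 - 1 - i) = i by omega,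
        show μ.rowLen 0 - 1 - (μ.rowLen 0 - 1 - j) = j by omega]
    have := hT i j hm
    omega
  · rw [if_neg hm]
    exact (T.zeros hm).symm

lemma rotSkew_unrot {μ : YoungDiagram} (n : ℕ) (U : SkewTab) (hc : U.cells = rotCells μ)
    (hU : ∀ i j, (i, j) ∈ U.cells → U.entry i j + 1 ≤ n)
    (hT : ∀ i j, (i, j) ∈ μ → (unrot n U hc hU) i j + 1 ≤ n) :
    rotSkew n (unrot n U hc hU) hT = U := by
  apply SkewTab.ext'
  · rw [rotSkew_cells, hc]
  · funext i j
    rw [rotSkew_entry]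
    by_cases hm : (i, j) ∈ rotCells μ
    · rw [if_pos hm]
      have hm' := mem_rotCells.mp hm
      dsimp only at hm'
      rw [unrot_entry, if_pos hm'.2.2]
      rw [show μ.colLen 0 - 1 - (μ.colLen 0 - 1 - i) = i by omega,
          show μ.rowLen 0 - 1 - (μ.rowLen 0 - 1 - j) = j by omega]
      have hUc : (i, j) ∈ U.cells := by rw [hc]; exact hm
      have := hU i j hUc
      omega
    · rw [if_neg hm]
      have hnc : (i, j) ∉ U.cells := by rw [hc]; exact hm
      exact (U.zeros hnc).symm


/-- For `w ∈ S_{n+1}` and a partition `α`, the number of semistandard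
Young tableaux of shape `α'` whose column word is a reduced word for `w₀ w⁻¹ w₀` equals
the number of semistandard skew tableaux of shape the 180-degree rotation of `α'` whose
column word is a reduced word for `w`. -/
theorem statement9 (n : ℕ) (w : Perm') (hw : MemS (n + 1) w) (α : YoungDiagram) :
    Nat.card {T : SemistandardYoungTableau α.transpose //
        IsReducedWord (longest (n + 1) * w⁻¹ * longest (n + 1)) (colWord T)} =
      Nat.card {U : SkewTab //
        U.cells = rotCells α.transpose ∧ IsReducedWord w U.colWord} := by
  classical
  have hvmem : MemS (n + 1) (longest (n + 1) * w⁻¹ * longest (n + 1)) :=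
    ((MemS_longest (n + 1)).mul hw.inv).mul (MemS_longest (n + 1))
  have hbT : ∀ (T : SemistandardYoungTableau α.transpose),
      IsReducedWord (longest (n + 1) * w⁻¹ * longest (n + 1)) (colWord T) →
      ∀ i j, (i, j) ∈ α.transpose → T i j + 1 ≤ n := by
    intro T hT i j hm
    exact (reduced_letters hvmem hT _ (mem_colWord T hm)).2
  have hbU : ∀ (U : SkewTab), IsReducedWord w U.colWord →
      ∀ i j, (i, j) ∈ U.cells → U.entry i j + 1 ≤ n := by
    intro U hU i j hm
    exact (reduced_letters hw hU _ (U.mem_colWord hm)).2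
  have hbT' : ∀ (U : SkewTab) (hc : U.cells = rotCells α.transpose)
      (hU : ∀ i j, (i, j) ∈ U.cells → U.entry i j + 1 ≤ n),
      ∀ i j, (i, j) ∈ α.transpose → (unrot n U hc hU) i j + 1 ≤ n := by
    intro U hc hU i j hm
    obtain ⟨hia, hjb⟩ := cell_lt hm
    have hrot : (α.transpose.colLen 0 - 1 - i, α.transpose.rowLen 0 - 1 - j) ∈ U.cells := by
      rw [hc, mem_rotCells]
      dsimp only
      refine ⟨by omega, by omega, ?_⟩
      rw [show α.transpose.colLen 0 - 1 - (α.transpose.colLen 0 - 1 - i) = i by omega,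
          show α.transpose.rowLen 0 - 1 - (α.transpose.rowLen 0 - 1 - j) = j by omega]
      exact hm
    have hb := hU _ _ hrot
    rw [unrot_entry, if_pos hm]
    omega
  have condF : ∀ (T : SemistandardYoungTableau α.transpose)
      (hT : IsReducedWord (longest (n + 1) * w⁻¹ * longest (n + 1)) (colWord T)),
      (rotSkew n T (hbT T hT)).cells = rotCells α.transpose ∧
        IsReducedWord w (rotSkew n T (hbT T hT)).colWord := by
    intro T hT
    refine ⟨rfl, ?_⟩
    rw [rotSkew_colWord]
    exact word_corr_fwd hw hT
  have condG : ∀ (U : SkewTab)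
      (hU : U.cells = rotCells α.transpose ∧ IsReducedWord w U.colWord),
      IsReducedWord (longest (n + 1) * w⁻¹ * longest (n + 1))
        (colWord (unrot n U hU.1 (hbU U hU.2))) := by
    intro U hU
    have hrot : rotSkew n (unrot n U hU.1 (hbU U hU.2))
        (hbT' U hU.1 (hbU U hU.2)) = U :=
      rotSkew_unrot n U hU.1 (hbU U hU.2) _
    have hcw : U.colWord =
        ((colWord (unrot n U hU.1 (hbU U hU.2))).reverse).map (fun e => n + 1 - e) := by
      conv_lhs => rw [← hrot]
      exact rotSkew_colWord n _ _
    have hlet' : ∀ e ∈ colWord (unrot n U hU.1 (hbU U hU.2)), 1 ≤ e ∧ e ≤ n := by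
      intro e he
      obtain ⟨i, j, hm, heq⟩ := colWord_letters _ he
      have := hbT' U hU.1 (hbU U hU.2) i j hm
      omega
    have hcw' : colWord (unrot n U hU.1 (hbU U hU.2)) =
        (U.colWord.reverse).map (fun e => n + 1 - e) := by
      conv_rhs => rw [hcw]
      exact (revmap_revmap hlet').symm
    rw [hcw']
    exact word_corr_bwd hw hU.2
  exact Nat.card_congr
    { toFun := fun Tp => ⟨rotSkew n Tp.1 (hbT Tp.1 Tp.2), condF Tp.1 Tp.2⟩
      invFun := fun Up => ⟨unrot n Up.1 Up.2.1 (hbU Up.1 Up.2.2), condG Up.1 Up.2⟩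
      left_inv := by
        rintro ⟨T, hT⟩
        apply Subtype.ext
        dsimp only
        exact unrot_rotSkew n T (hbT T hT) _ _
      right_inv := by
        rintro ⟨U, hU⟩
        apply Subtype.ext
        dsimp only
        exact rotSkew_unrot n U hU.1 (hbU U hU.2) _ }


end SchubertQuiver
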